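/- For real numbers λ₁,…,λₙ and any real numbers v > 0 and b, the k-th elementary symmetric polynomial of the shifted values (vλ₁ − b, …, vλₙ − b) equals σ_k shifted by binomial-weighted lower terms: σ_k(vλ − b·𝟙) = Σ_{l=0}^{k} (C(k,l)·C(n,k)/C(n,k−l)) · v^{k−l} · σ_{k−l}(λ) · (−b)^{l}, where C(·,·) are binomial coefficients. -/

import Mathlib

open scoped BigOperators Classical
open MeasureTheory

noncomputable section

abbrev E (n : ℕ) := EuclideanSpace ℝ (Fin n)

/-- k-th elementary symmetric polynomial of a vector in ℝⁿ. -/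
def esymm (n k : ℕ) (lam : Fin n → ℝ) : ℝ :=
  ∑ s ∈ Finset.univ.powersetCard k, ∏ i ∈ s, lam i

/-- Eigenvalue vector of a real symmetric matrix (junk value 0 otherwise). -/
def eigs {n : ℕ} (M : Matrix (Fin n) (Fin n) ℝ) : Fin n → ℝ :=
  if h : M.IsHermitian then h.eigenvalues else 0

/-- σ_k of the eigenvalues of a symmetric matrix. -/
def Sk (n k : ℕ) (M : Matrix (Fin n) (Fin n) ℝ) : ℝ := esymm n k (eigs M)

/-- The (closed) Gårding cone Γ_k. -/
def GammaK (n k : ℕ) : Set (Fin n → ℝ) :=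
  {lam | ∀ i, 1 ≤ i → i ≤ k → 0 ≤ esymm n i lam}

/-- i-th partial derivative. -/
def pd {n : ℕ} (u : E n → ℝ) (i : Fin n) (x : E n) : ℝ :=
  fderiv ℝ u x (EuclideanSpace.single i 1)

/-- Hessian matrix. -/
def hess {n : ℕ} (u : E n → ℝ) (x : E n) : Matrix (Fin n) (Fin n) ℝ :=
  Matrix.of fun i j => pd (fun y => pd u j y) i x

/-- |∇u|². -/
def gradsq {n : ℕ} (u : E n → ℝ) (x : E n) : ℝ := ∑ i, (pd u i x) ^ 2

/-- The conformal Schouten-type matrix A_{ij}(u) = u u_{ij} - (1/2)|∇u|² δ_{ij}. -/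
def Amat {n : ℕ} (u : E n → ℝ) (x : E n) : Matrix (Fin n) (Fin n) ℝ :=
  Matrix.of fun i j => u x * hess u x i j - (1 / 2) * gradsq u x * (if i = j then 1 else 0)


open Finset in
lemma count_supersets {n k : ℕ} (t : Finset (Fin n)) (ht : t.card ≤ k) :
    (((Finset.univ : Finset (Fin n)).powersetCard k).filter (fun s => t ⊆ s)).card
      = (n - t.card).choose (k - t.card) := by
  have h1 : (((Finset.univ : Finset (Fin n)).powersetCard k).filter (fun s => t ⊆ s)).card
      = (tᶜ.powersetCard (k - t.card)).card := by
    apply Finset.card_bij' (fun s _ => s \ t) (fun r _ => r ∪ t)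
    · intro s hs
      simp only [Finset.mem_filter, Finset.mem_powersetCard] at hs
      obtain ⟨⟨hsub, hcard⟩, hts⟩ := hs
      rw [Finset.mem_powersetCard]
      refine ⟨fun x hx => ?_, ?_⟩
      · simp only [Finset.mem_sdiff] at hx
        simp [Finset.mem_compl, hx.2]
      · rw [Finset.card_sdiff_of_subset hts, hcard]
    · intro r hr
      rw [Finset.mem_powersetCard] at hr
      obtain ⟨hsub, hcard⟩ := hr
      have hdisj : Disjoint r t := by
        rw [Finset.disjoint_right]
        intro x hxt hxr
        exact (Finset.mem_compl.mp (hsub hxr)) hxt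
      simp only [Finset.mem_filter, Finset.mem_powersetCard]
      refine ⟨⟨Finset.subset_univ _, ?_⟩, Finset.subset_union_right⟩
      rw [Finset.card_union_of_disjoint hdisj, hcard]
      omega
    · intro s hs
      simp only [Finset.mem_filter] at hs
      exact Finset.sdiff_union_of_subset hs.2
    · intro r hr
      rw [Finset.mem_powersetCard] at hr
      have hdisj : Disjoint r t := by
        rw [Finset.disjoint_right]
        intro x hxt hxr
        exact (Finset.mem_compl.mp (hr.1 hxr)) hxt
      rw [Finset.union_sdiff_right, Finset.sdiff_eq_self_of_disjoint hdisj]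
  rw [h1, Finset.card_powersetCard, Finset.card_compl, Fintype.card_fin]

lemma esymm_shift {n : ℕ} (k : ℕ) (hkn : k ≤ n) (μ : Fin n → ℝ) (c : ℝ)
    (hcount : ∀ t : Finset (Fin n), t.card ≤ k →
      (((Finset.univ : Finset (Fin n)).powersetCard k).filter (fun s => t ⊆ s)).card
        = (n - t.card).choose (k - t.card)) :
    esymm n k (fun i => μ i + c) =
      ∑ m ∈ Finset.range (k + 1),
        ((n - m).choose (k - m) : ℝ) * esymm n m μ * c ^ (k - m) := by
  classical
  unfold esymm
  have step1 : ∑ s ∈ (Finset.univ : Finset (Fin n)).powersetCard k, ∏ i ∈ s, (μ i + c)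
      = ∑ s ∈ (Finset.univ : Finset (Fin n)).powersetCard k,
          ∑ t ∈ s.powerset, (∏ i ∈ t, μ i) * c ^ (k - t.card) := by
    refine Finset.sum_congr rfl fun s hs => ?_
    rw [Finset.mem_powersetCard] at hs
    rw [Finset.prod_add]
    refine Finset.sum_congr rfl fun t ht => ?_
    rw [Finset.mem_powerset] at ht
    rw [Finset.prod_const, Finset.card_sdiff_of_subset ht, hs.2]
  rw [step1]
  rw [Finset.sum_comm'
      (t' := (Finset.univ : Finset (Fin n)).powerset.filter (fun t => t.card ≤ k))
      (s' := fun t => ((Finset.univ : Finset (Fin n)).powersetCard k).filter (fun s => t ⊆ s))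
      (fun s t => ?_)]
  · -- now sum over t, inner constant
    have step2 : ∀ t ∈ (Finset.univ : Finset (Fin n)).powerset.filter (fun t => t.card ≤ k),
        ∑ _s ∈ ((Finset.univ : Finset (Fin n)).powersetCard k).filter (fun s => t ⊆ s),
          (∏ i ∈ t, μ i) * c ^ (k - t.card)
        = ((n - t.card).choose (k - t.card) : ℝ) * ((∏ i ∈ t, μ i) * c ^ (k - t.card)) := by
      intro t ht
      rw [Finset.sum_const, hcount t (Finset.mem_filter.mp ht).2, nsmul_eq_mul]
    rw [Finset.sum_congr rfl step2]
    -- group by cardinality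
    rw [← Finset.sum_fiberwise_of_maps_to (g := fun t : Finset (Fin n) => t.card)
        (t := Finset.range (k + 1)) (fun t ht => by
          simp only [Finset.mem_filter] at ht
          exact Finset.mem_range.mpr (Nat.lt_succ_of_le ht.2))]
    refine Finset.sum_congr rfl fun m hm => ?_
    rw [Finset.mem_range, Nat.lt_succ_iff] at hm
    have hset : ((Finset.univ : Finset (Fin n)).powerset.filter (fun t => t.card ≤ k)).filter
        (fun t => t.card = m) = (Finset.univ : Finset (Fin n)).powersetCard m := by
      ext t
      simp only [Finset.mem_filter, Finset.mem_powerset, Finset.mem_powersetCard]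
      constructor
      · rintro ⟨⟨h1, _⟩, h3⟩; exact ⟨h1, h3⟩
      · rintro ⟨h1, h2⟩; exact ⟨⟨h1, h2 ▸ hm⟩, h2⟩
    rw [hset, Finset.mul_sum, Finset.sum_mul]
    refine Finset.sum_congr rfl fun t ht => ?_
    rw [(Finset.mem_powersetCard.mp ht).2]
    ring
  · simp only [Finset.mem_powersetCard, Finset.mem_powerset, Finset.mem_filter]
    constructor
    · rintro ⟨⟨h1, h2⟩, h3⟩
      exact ⟨⟨⟨Finset.subset_univ _, h2⟩, h3⟩, Finset.subset_univ _,
        h2 ▸ Finset.card_le_card h3⟩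
    · exact fun h => h.1

lemma esymm_smul (n m : ℕ) (v : ℝ) (lam : Fin n → ℝ) :
    esymm n m (fun i => v * lam i) = v ^ m * esymm n m lam := by
  unfold esymm
  rw [Finset.mul_sum]
  refine Finset.sum_congr rfl fun s hs => ?_
  rw [Finset.prod_mul_distrib, Finset.prod_const, (Finset.mem_powersetCard.mp hs).2]

theorem stmt4 (n k : ℕ) (hkn : k ≤ n) (lam : Fin n → ℝ) (v b : ℝ) (hv : 0 < v) :
    esymm n k (fun i => v * lam i - b) =
      ∑ l ∈ Finset.range (k + 1),
        ((k.choose l : ℝ) * (n.choose k : ℝ) / (n.choose (k - l) : ℝ)) *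
          v ^ (k - l) * esymm n (k - l) lam * (-b) ^ l := by
  have hμ : (fun i => v * lam i - b) = fun i => (v * lam i) + (-b) := by
    funext i; ring
  rw [hμ, esymm_shift k hkn _ (-b) (fun t ht => count_supersets t ht),
    ← Finset.sum_range_reflect]
  refine Finset.sum_congr rfl fun m hm => ?_
  rw [Finset.mem_range, Nat.lt_succ_iff] at hm
  have h1 : k + 1 - 1 - m = k - m := by omega
  have h2 : k - (k - m) = m := Nat.sub_sub_self hm
  rw [h1, h2, esymm_smul]
  have hne : ((n.choose (k - m) : ℝ)) ≠ 0 :=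
    Nat.cast_ne_zero.mpr (Nat.choose_pos ((Nat.sub_le k m).trans hkn)).ne'
  have h4 : n.choose k * k.choose m = n.choose (k - m) * ((n - (k - m)).choose m) := by
    rw [← Nat.choose_symm hm, Nat.choose_mul (n := n) (k := k) (Nat.sub_le k m), h2]
  have hid : ((n - (k - m)).choose m : ℝ) =
      (k.choose m : ℝ) * (n.choose k : ℝ) / (n.choose (k - m) : ℝ) := by
    rw [eq_div_iff hne]
    exact_mod_cast by rw [mul_comm, ← h4, mul_comm]
  rw [hid]
  ring
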